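/- arXiv:2509.11926 — 2 statements merged into one kernel-verified Lean document; each statement's English description precedes it below -/
import Mathlib

section
/- Let Θ ∈ ℝ^{M×M} be invertible and let A ∈ ℝ^{2M×2M} be the block matrix with top-right block A_{M,M} = Θ⁻¹ and all other blocks zero. Let H = [I_M 0] ∈ ℝ^{M×2M}. Then for any μ > 0, the matrix C = HᵀH + μ(I−A)ᵀHᵀH(I−A) is invertible and C⁻¹Hᵀ = [I_M; Θ], i.e., the solution x* = C⁻¹Hᵀy of the MAP problem satisfies x* = [y; Θy]. -/
open Matrix

/-- Interpolator theorem: with `A` having `Θ⁻¹` as only nonzero (top-right) block and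
`H = [I 0]`, the normal-equation matrix `C = HᵀH + μ(I−A)ᵀHᵀH(I−A)` is invertible and
`C⁻¹Hᵀ = [I; Θ]`, so `x* = C⁻¹Hᵀy = [y; Θy]`. -/
theorem stmt0 (M : ℕ) (Θ : Matrix (Fin M) (Fin M) ℝ) (hΘ : IsUnit Θ.det)
    (μ : ℝ) (hμ : 0 < μ)
    (A : Matrix (Fin M ⊕ Fin M) (Fin M ⊕ Fin M) ℝ)
    (hA : A = Matrix.fromBlocks 0 Θ⁻¹ 0 0)
    (H : Matrix (Fin M) (Fin M ⊕ Fin M) ℝ)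
    (hH : H = Matrix.fromCols 1 0)
    (C : Matrix (Fin M ⊕ Fin M) (Fin M ⊕ Fin M) ℝ)
    (hC : C = Hᵀ * H + μ • ((1 - A)ᵀ * Hᵀ * H * (1 - A))) :
    IsUnit C.det ∧
    C⁻¹ * Hᵀ = Matrix.fromRows (1 : Matrix (Fin M) (Fin M) ℝ) Θ ∧
    ∀ y : Fin M → ℝ,
      (C⁻¹ *ᵥ (Hᵀ *ᵥ y)) = Sum.elim y (Θ *ᵥ y) := by
  set P := Θ⁻¹ with hPdef
  have hPΘ : P * Θ = 1 := Matrix.nonsing_inv_mul Θ hΘ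
  have hΘP : Θ * P = 1 := Matrix.mul_nonsing_inv Θ hΘ
  have hPΘt : Pᵀ * Θᵀ = 1 := by rw [← Matrix.transpose_mul, hΘP, Matrix.transpose_one]
  have hΘtP : Θᵀ * Pᵀ = 1 := by rw [← Matrix.transpose_mul, hPΘ, Matrix.transpose_one]
  have hp1 : P * (Θ * Θᵀ) = Θᵀ := by rw [← Matrix.mul_assoc, hPΘ, Matrix.one_mul]
  have hp2 : Θᵀ * (Pᵀ * P) = P := by rw [← Matrix.mul_assoc, hΘtP, Matrix.one_mul]
  have hp3 : Pᵀ * (P * Θ) = Pᵀ := by rw [hPΘ, Matrix.mul_one]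
  have hp4 : Pᵀ * (P * (Θ * Θᵀ)) = 1 := by rw [hp1, hPΘt]
  have hp5 : Θ * (Θᵀ * Pᵀ) = Θ := by rw [hΘtP, Matrix.mul_one]
  have hμ0 : μ ≠ 0 := ne_of_gt hμ
  -- explicit block form of C
  have hHt : Hᵀ = Matrix.fromRows (1 : Matrix (Fin M) (Fin M) ℝ) 0 := by
    rw [hH, Matrix.transpose_fromCols, Matrix.transpose_one, Matrix.transpose_zero]
  have hHtH : Hᵀ * H = Matrix.fromBlocks 1 0 0 0 := by
    rw [hHt, hH, Matrix.fromRows_mul_fromCols]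
    simp
  have h1A : (1 : Matrix (Fin M ⊕ Fin M) (Fin M ⊕ Fin M) ℝ) - A
      = Matrix.fromBlocks 1 (-P) 0 1 := by
    rw [hA, ← Matrix.fromBlocks_one, sub_eq_add_neg, Matrix.fromBlocks_neg,
      Matrix.fromBlocks_add]
    simp
  have hCblock : C = Matrix.fromBlocks ((1 + μ) • 1) ((-μ) • P) ((-μ) • Pᵀ)
      (μ • (Pᵀ * P)) := by
    rw [hC, h1A, Matrix.fromBlocks_transpose, Matrix.transpose_one, Matrix.transpose_zero,
      Matrix.transpose_neg, Matrix.mul_assoc _ Hᵀ H, hHtH]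
    rw [Matrix.fromBlocks_multiply, Matrix.fromBlocks_multiply,
      Matrix.fromBlocks_smul, Matrix.fromBlocks_add, Matrix.fromBlocks_inj]
    refine ⟨?_, ?_, ?_, ?_⟩ <;> simp <;> module
  -- explicit inverse of C
  set D : Matrix (Fin M ⊕ Fin M) (Fin M ⊕ Fin M) ℝ :=
    Matrix.fromBlocks 1 Θᵀ Θ ((1 + μ⁻¹) • (Θ * Θᵀ)) with hD
  have hCD : C * D = 1 := by
    rw [hCblock, hD, Matrix.fromBlocks_multiply, ← Matrix.fromBlocks_one,
      Matrix.fromBlocks_inj]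
    refine ⟨?_, ?_, ?_, ?_⟩ <;>
      simp only [Matrix.smul_mul, Matrix.mul_smul, Matrix.mul_one, Matrix.one_mul,
        smul_smul, Matrix.mul_assoc, hPΘ, hΘP, hPΘt, hΘtP, hp1, hp2, hp3, hp4, hp5] <;>
      match_scalars <;> field_simp <;> ring
  have hDC : D * C = 1 := by
    rw [hCblock, hD, Matrix.fromBlocks_multiply, ← Matrix.fromBlocks_one,
      Matrix.fromBlocks_inj]
    refine ⟨?_, ?_, ?_, ?_⟩ <;>
      simp only [Matrix.smul_mul, Matrix.mul_smul, Matrix.mul_one, Matrix.one_mul,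
        smul_smul, Matrix.mul_assoc, hPΘ, hΘP, hPΘt, hΘtP, hp1, hp2, hp3, hp4, hp5] <;>
      match_scalars <;> field_simp <;> ring
  have hdet : IsUnit C.det := Matrix.isUnit_det_of_right_inverse hCD
  have hCinv : C⁻¹ = D := Matrix.inv_eq_right_inv hCD
  refine ⟨hdet, ?_, ?_⟩
  · rw [hCinv, hHt, hD, Matrix.fromBlocks_mul_fromRows]
    simp
  · intro y
    rw [Matrix.mulVec_mulVec, hCinv, hHt, hD, Matrix.fromBlocks_mul_fromRows]
    simp
end

section
/- Let H = [I_M 0] ∈ ℝ^{M×(M+N)} and A have only nonzero top-right block A_{M,N} ∈ ℝ^{M×N} with M = N and A_{M,N} invertible. Then the block matrix C = [[(1+μ)I_M, −μA_{M,N}], [−μA_{M,N}ᵀ, μA_{M,N}ᵀA_{M,N}]] is invertible for every μ > 0. -/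
open Matrix

/-- Invertibility of the normal-equation block matrix
`C = [[(1+μ)I, −μA], [−μAᵀ, μAᵀA]]` when `A` is square and invertible and `μ > 0`. -/
theorem stmt14 (M : ℕ) (Amn : Matrix (Fin M) (Fin M) ℝ) (hA : IsUnit Amn.det)
    (μ : ℝ) (hμ : 0 < μ)
    (C : Matrix (Fin M ⊕ Fin M) (Fin M ⊕ Fin M) ℝ)
    (hC : C = Matrix.fromBlocks ((1 + μ) • (1 : Matrix (Fin M) (Fin M) ℝ)) (-μ • Amn)
      (-μ • Amnᵀ) (μ • (Amnᵀ * Amn))) :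
    IsUnit C.det := by
  subst hC
  have hμ0 : μ ≠ 0 := ne_of_gt hμ
  have hAT : IsUnit Amnᵀ.det := by simpa [Matrix.det_transpose] using hA
  have hDdet : IsUnit (μ • (Amnᵀ * Amn)).det := by
    rw [Matrix.det_smul, Matrix.det_mul, Matrix.det_transpose]
    simpa [Fintype.card_fin] using (IsUnit.pow M (isUnit_iff_ne_zero.2 hμ0)).mul (hA.mul hA)
  have hDinv : Invertible (μ • (Amnᵀ * Amn)) := (μ • (Amnᵀ * Amn)).invertibleOfIsUnitDet hDdet
  rw [Matrix.det_fromBlocks₂₂]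
  have hSchur : (1 + μ) • (1 : Matrix (Fin M) (Fin M) ℝ) -
      (-μ • Amn) * ⅟(μ • (Amnᵀ * Amn)) * (-μ • Amnᵀ) = 1 := by
    rw [Matrix.invOf_eq_nonsing_inv]
    have hinv : (μ • (Amnᵀ * Amn))⁻¹ = μ⁻¹ • ((Amn)⁻¹ * (Amnᵀ)⁻¹) := by
      rw [← Matrix.mul_inv_rev]
      have : Invertible μ := invertibleOfNonzero hμ0
      have hdet2 : IsUnit (Amnᵀ * Amn).det := by
        rw [Matrix.det_mul, Matrix.det_transpose]; exact hA.mul hA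
      rw [(Amnᵀ * Amn).inv_smul μ hdet2, invOf_eq_inv]
    rw [hinv]
    have h1 : Amn * (Amn⁻¹ * Amnᵀ⁻¹) * Amnᵀ = 1 := by
      rw [← Matrix.mul_assoc, Matrix.mul_nonsing_inv _ hA, Matrix.one_mul,
        Matrix.nonsing_inv_mul _ hAT]
    simp only [neg_smul, Matrix.neg_mul, Matrix.mul_neg, neg_neg,
      Matrix.smul_mul, Matrix.mul_smul, smul_smul, smul_neg, h1, smul_eq_mul]
    rw [← sub_smul]
    have h2 : 1 + μ - μ * (μ⁻¹ * μ) = 1 := by field_simp; ring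
    rw [h2, one_smul]
  rw [hSchur]
  simpa using hDdet
end
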